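/- Let a₁₂, a₂₁, a₁₁, a₂₂ be continuous on [t₀,∞), set B = a₁₁ - a₂₂. If a₁₂(t) ≥ 0 for t ≥ t₀, ∫_{t₀}^∞ a₁₂(τ)·exp(-∫_{t₀}^τ B(s)ds)dτ = +∞, and -∫_{t₀}^∞ a₂₁(τ)·exp(∫_{t₀}^τ B(s)ds)dτ = +∞, then for every t₁ ≥ t₀ the Riccati equation z' + a₁₂(t)z² + B(t)z - a₂₁(t) = 0 has no solution defined on all of [t₁,∞). -/

import Mathlib

open Set Real Filter

private lemma ftc {f : ℝ → ℝ} (hf : Continuous f) (a t : ℝ) :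
    HasDerivAt (fun u => ∫ s in a..u, f s) (f t) t :=
  (hf.integral_hasStrictDerivAt a t).hasDerivAt

theorem stmt8 (t₀ : ℝ) (a₁₁ a₁₂ a₂₁ a₂₂ : ℝ → ℝ)
    (h11 : ContinuousOn a₁₁ (Ici t₀)) (h12 : ContinuousOn a₁₂ (Ici t₀))
    (h21 : ContinuousOn a₂₁ (Ici t₀)) (h22 : ContinuousOn a₂₂ (Ici t₀))
    (B : ℝ → ℝ) (hB : B = fun t => a₁₁ t - a₂₂ t)
    (ha12 : ∀ t ≥ t₀, 0 ≤ a₁₂ t)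
    (hdiv1 : Tendsto (fun t => ∫ τ in t₀..t,
        a₁₂ τ * Real.exp (-∫ s in t₀..τ, B s)) atTop atTop)
    (hdiv2 : Tendsto (fun t => -∫ τ in t₀..t,
        a₂₁ τ * Real.exp (∫ s in t₀..τ, B s)) atTop atTop) :
    ∀ t₁ ≥ t₀, ¬ ∃ z : ℝ → ℝ, ∀ t ≥ t₁,
      HasDerivAt z (-(a₁₂ t * z t ^ 2 + B t * z t - a₂₁ t)) t := by
  intro t₁ ht₁ hex
  obtain ⟨z, hz⟩ := hex
  have hBc : ContinuousOn B (Ici t₀) := by rw [hB]; exact h11.sub h22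
  -- continuous extensions to all of ℝ
  have hmax : Continuous fun t : ℝ => max t t₀ := continuous_id.max continuous_const
  have hmem : ∀ t : ℝ, max t t₀ ∈ Ici t₀ := fun t => mem_Ici.2 (le_max_right _ _)
  set Be : ℝ → ℝ := fun t => B (max t t₀) with hBedef
  set A12 : ℝ → ℝ := fun t => a₁₂ (max t t₀) with hA12def
  set A21 : ℝ → ℝ := fun t => a₂₁ (max t t₀) with hA21def
  have hBec : Continuous Be := hBc.comp_continuous hmax hmem
  have hA12c : Continuous A12 := h12.comp_continuous hmax hmem
  have hA21c : Continuous A21 := h21.comp_continuous hmax hmem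
  have hBeq : ∀ t ≥ t₀, Be t = B t := fun t ht => by
    simp only [hBedef]; rw [max_eq_left ht]
  have hA12eq : ∀ t ≥ t₀, A12 t = a₁₂ t := fun t ht => by
    simp only [hA12def]; rw [max_eq_left ht]
  have hA21eq : ∀ t ≥ t₀, A21 t = a₂₁ t := fun t ht => by
    simp only [hA21def]; rw [max_eq_left ht]
  have hA12nn : ∀ t, 0 ≤ A12 t := fun t => ha12 _ (hmem t)
  -- I, E, p, q
  set I : ℝ → ℝ := fun t => ∫ s in t₀..t, Be s with hIdef
  have hI : ∀ t, HasDerivAt I (Be t) t := fun t => ftc hBec t₀ t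
  have hIc : Continuous I := continuous_iff_continuousAt.2 fun t => (hI t).continuousAt
  have hIeq : ∀ τ ≥ t₀, (∫ s in t₀..τ, B s) = I τ := by
    intro τ hτ
    apply intervalIntegral.integral_congr
    intro s hs
    rw [uIcc_of_le hτ] at hs
    exact (hBeq s (le_trans hs.1 (le_refl s))).symm
  set p : ℝ → ℝ := fun t => A12 t * Real.exp (-(I t)) with hpdef
  set q : ℝ → ℝ := fun t => A21 t * Real.exp (I t) with hqdef
  have hpc : Continuous p := hA12c.mul (Real.continuous_exp.comp hIc.neg)
  have hqc : Continuous q := hA21c.mul (Real.continuous_exp.comp hIc)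
  have hpnn : ∀ t, 0 ≤ p t := fun t => mul_nonneg (hA12nn t) (Real.exp_pos _).le
  -- transfer hypothesis integrals to p and q
  have hpeq : ∀ t ≥ t₀, (∫ τ in t₀..t, a₁₂ τ * Real.exp (-∫ s in t₀..τ, B s))
      = ∫ τ in t₀..t, p τ := by
    intro t ht
    apply intervalIntegral.integral_congr
    intro τ hτ
    rw [uIcc_of_le ht] at hτ
    rw [hpdef]; dsimp only
    rw [hA12eq τ hτ.1, hIeq τ hτ.1]
  have hqeq : ∀ t ≥ t₀, (∫ τ in t₀..t, a₂₁ τ * Real.exp (∫ s in t₀..τ, B s))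
      = ∫ τ in t₀..t, q τ := by
    intro t ht
    apply intervalIntegral.integral_congr
    intro τ hτ
    rw [uIcc_of_le ht] at hτ
    rw [hqdef]; dsimp only
    rw [hA21eq τ hτ.1, hIeq τ hτ.1]
  have hdiv1' : Tendsto (fun t => ∫ τ in t₀..t, p τ) atTop atTop := by
    apply hdiv1.congr'
    filter_upwards [eventually_ge_atTop t₀] with t ht using hpeq t ht
  have hdiv2' : Tendsto (fun t => -∫ τ in t₀..t, q τ) atTop atTop := by
    apply hdiv2.congr'
    filter_upwards [eventually_ge_atTop t₀] with t ht using by rw [hqeq t ht]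
  -- w = E z and its derivative
  set E : ℝ → ℝ := fun t => Real.exp (I t) with hEdef
  have hE : ∀ t, HasDerivAt E (E t * Be t) t := fun t => (hI t).exp
  set w : ℝ → ℝ := fun t => E t * z t with hwdef
  have hw : ∀ t ≥ t₁, HasDerivAt w (q t - p t * w t ^ 2) t := by
    intro t ht
    have ht0 : t₀ ≤ t := le_trans ht₁ ht
    have h := (hE t).mul (hz t ht)
    refine h.congr_deriv ?_
    have hBt := hBeq t ht0
    have hA12t := hA12eq t ht0
    have hA21t := hA21eq t ht0
    have hexp : Real.exp (-(I t)) = (Real.exp (I t))⁻¹ := Real.exp_neg _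
    have hne : Real.exp (I t) ≠ 0 := (Real.exp_pos _).ne'
    rw [hqdef, hpdef, hwdef, hEdef]; dsimp only
    rw [hA12t, hA21t, hexp]
    field_simp
    rw [hBt]
    ring
  -- Q and F, the integrated quantities
  set Q : ℝ → ℝ := fun t => ∫ τ in t₁..t, q τ with hQdef
  -- continuous version of w for integrands
  have hzc : ContinuousOn z (Ici t₁) := fun t ht =>
    (hz t ht).continuousAt.continuousWithinAt
  have hwc : ContinuousOn w (Ici t₁) :=
    ((Real.continuous_exp.comp hIc).continuousOn).mul hzc
  have hmax1 : Continuous fun t : ℝ => max t t₁ := continuous_id.max continuous_const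
  set v : ℝ → ℝ := fun t => w (max t t₁) with hvdef
  have hvc : Continuous v := hwc.comp_continuous hmax1 fun t => mem_Ici.2 (le_max_right _ _)
  have hveq : ∀ t ≥ t₁, v t = w t := fun t ht => by
    simp only [hvdef]; rw [max_eq_left ht]
  set g : ℝ → ℝ := fun t => p t * v t ^ 2 with hgdef
  have hgc : Continuous g := hpc.mul (hvc.pow 2)
  have hgnn : ∀ t, 0 ≤ g t := fun t => mul_nonneg (hpnn t) (sq_nonneg _)
  set F : ℝ → ℝ := fun t => ∫ τ in t₁..t, g τ with hFdef
  have hF : ∀ t, HasDerivAt F (g t) t := fun t => ftc hgc t₁ t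
  have hFc : Continuous F := continuous_iff_continuousAt.2 fun t => (hF t).continuousAt
  have hQ : ∀ t, HasDerivAt Q (q t) t := fun t => ftc hqc t₁ t
  -- fundamental identity
  have hident : ∀ t ≥ t₁, w t = w t₁ + Q t - F t := by
    intro t ht
    have hderiv : ∀ τ ∈ uIcc t₁ t, HasDerivAt w (q τ - g τ) τ := by
      intro τ hτ
      rw [uIcc_of_le ht] at hτ
      have h1 := hw τ hτ.1
      rw [hgdef]; dsimp only
      rw [hveq τ hτ.1]
      exact h1
    have hint : IntervalIntegrable (fun τ => q τ - g τ) MeasureTheory.volume t₁ t :=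
      (hqc.sub hgc).intervalIntegrable _ _
    have h2 := intervalIntegral.integral_eq_sub_of_hasDerivAt hderiv hint
    rw [intervalIntegral.integral_sub (hqc.intervalIntegrable _ _)
      (hgc.intervalIntegrable _ _)] at h2
    rw [hQdef, hFdef]; dsimp only
    linarith [h2]
  -- Q tends to -∞
  have hqint : ∀ a b : ℝ, IntervalIntegrable q MeasureTheory.volume a b :=
    fun a b => hqc.intervalIntegrable _ _
  have hQsplit : ∀ t, Q t = (∫ τ in t₀..t, q τ) - ∫ τ in t₀..t₁, q τ := by
    intro t
    have := intervalIntegral.integral_add_adjacent_intervals (hqint t₀ t₁) (hqint t₁ t)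
    rw [hQdef]; dsimp only; linarith
  have hQbot : Tendsto Q atTop atBot := by
    have h1 : Tendsto (fun t => ∫ τ in t₀..t, q τ) atTop atBot := by
      have h := tendsto_neg_atTop_atBot.comp hdiv2'
      refine h.congr fun u => ?_
      simp [Function.comp]
    have h2 : Tendsto (fun t => (∫ τ in t₀..t, q τ) - ∫ τ in t₀..t₁, q τ) atTop atBot :=
      tendsto_atBot_add_const_right _ _ h1
    exact h2.congr fun t => (hQsplit t).symm
  -- find T
  have hev : ∀ᶠ t in atTop, Q t ≤ -1 - w t₁ := hQbot.eventually_le_atBot _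
  obtain ⟨T₀, hT₀⟩ := (hev.and (eventually_ge_atTop t₁)).exists_forall_of_atTop
  set T : ℝ := max T₀ t₁ with hTdef
  have hTt₁ : t₁ ≤ T := le_max_right _ _
  have hwub : ∀ t ≥ T, w t ≤ -(1 + F t) := by
    intro t ht
    have ht1 : t₁ ≤ t := le_trans hTt₁ ht
    have h := hT₀ t (le_trans (le_max_left _ _) ht)
    have := hident t ht1
    linarith [h.1]
  -- F is nonneg on [t₁, ∞)
  have hFnn : ∀ t ≥ t₁, 0 ≤ F t := by
    intro t ht
    rw [hFdef]; dsimp only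
    apply intervalIntegral.integral_nonneg ht
    intro τ _; exact hgnn τ
  have hFpos : ∀ t ≥ t₁, 0 < 1 + F t := fun t ht => by linarith [hFnn t ht]
  -- G = -(1+F)⁻¹ and its derivative
  set G : ℝ → ℝ := fun t => -(1 + F t)⁻¹ with hGdef
  have hG : ∀ t ≥ t₁, HasDerivAt G (g t / (1 + F t) ^ 2) t := by
    intro t ht
    have hne : (1 : ℝ) + F t ≠ 0 := (hFpos t ht).ne'
    have h1 : HasDerivAt (fun u => (1 : ℝ) + F u) (g t) t := (hF t).const_add 1
    have h2 := (h1.inv hne).neg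
    refine h2.congr_deriv ?_
    field_simp
  -- final contradiction
  have hpint : ∀ a b : ℝ, IntervalIntegrable p MeasureTheory.volume a b :=
    fun a b => hpc.intervalIntegrable _ _
  have hkey : ∀ t ≥ T, (∫ τ in T..t, p τ) ≤ (1 + F T)⁻¹ := by
    intro t ht
    have ht1 : t₁ ≤ t := le_trans hTt₁ ht
    have hderiv : ∀ τ ∈ uIcc T t, HasDerivAt G (g τ / (1 + F τ) ^ 2) τ := by
      intro τ hτ
      rw [uIcc_of_le ht] at hτ
      exact hG τ (le_trans hTt₁ hτ.1)
    have hcontden : Continuous fun τ => ((1 : ℝ) + F τ) ^ 2 := (continuous_const.add hFc).pow 2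
    have hintG : IntervalIntegrable (fun τ => g τ / (1 + F τ) ^ 2)
        MeasureTheory.volume T t := by
      apply ContinuousOn.intervalIntegrable
      apply hgc.continuousOn.div hcontden.continuousOn
      intro τ hτ
      rw [uIcc_of_le ht] at hτ
      exact pow_ne_zero 2 (hFpos τ (le_trans hTt₁ hτ.1)).ne'
    have hFTC := intervalIntegral.integral_eq_sub_of_hasDerivAt hderiv hintG
    have hmono : (∫ τ in T..t, p τ) ≤ ∫ τ in T..t, g τ / (1 + F τ) ^ 2 := by
      apply intervalIntegral.integral_mono_on ht (hpint T t) hintG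
      intro τ hτ
      have hτ1 : t₁ ≤ τ := le_trans hTt₁ hτ.1
      have hFp := hFpos τ hτ1
      have hwτ := hwub τ hτ.1
      have hsq : (1 + F τ) ^ 2 ≤ w τ ^ 2 := by nlinarith
      have hgτ : p τ * (1 + F τ) ^ 2 ≤ g τ := by
        rw [hgdef]; dsimp only
        rw [hveq τ hτ1]
        exact mul_le_mul_of_nonneg_left hsq (hpnn τ)
      rw [le_div_iff₀ (by positivity : (0:ℝ) < (1 + F τ) ^ 2)]
      exact hgτ
    have hGt : G t < 0 := by
      rw [hGdef]; dsimp only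
      simp only [neg_lt, neg_zero]
      exact inv_pos.2 (hFpos t ht1)
    have hGT : G T = -(1 + F T)⁻¹ := rfl
    rw [hFTC, hGT] at hmono
    calc (∫ τ in T..t, p τ) ≤ G t - -(1 + F T)⁻¹ := hmono
      _ ≤ (1 + F T)⁻¹ := by simp only [hGdef] at hGt ⊢; linarith
  -- ∫ T..t p tends to ∞
  have hPsplit : ∀ t, (∫ τ in T..t, p τ) = (∫ τ in t₀..t, p τ) - ∫ τ in t₀..T, p τ := by
    intro t
    have := intervalIntegral.integral_add_adjacent_intervals (hpint t₀ T) (hpint T t)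
    linarith
  have hPtop : Tendsto (fun t => ∫ τ in T..t, p τ) atTop atTop := by
    have h2 : Tendsto (fun t => (∫ τ in t₀..t, p τ) - ∫ τ in t₀..T, p τ) atTop atTop :=
      tendsto_atTop_add_const_right _ _ hdiv1'
    exact h2.congr fun t => (hPsplit t).symm
  have hbig : ∀ᶠ t in atTop, (1 + F T)⁻¹ + 1 ≤ ∫ τ in T..t, p τ :=
    hPtop.eventually_ge_atTop _
  obtain ⟨t, ht1, ht2⟩ := (hbig.and (eventually_ge_atTop T)).exists
  have := hkey t ht2
  linarith
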